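/- Let α < β and k ≥ 0 an integer. Then the weighted Sobolev space H^{k+1}_β(ℝ₊) (with weight e^{βx}) is compactly embedded in H^k_α(ℝ₊) (with weight e^{αx}). -/

import Mathlib

open MeasureTheory Filter Topology Set
open scoped ENNReal

-- Cauchy-Schwarz for continuous functions on an interval
lemma wsce_cs {a b : ℝ} (hab : a ≤ b) {h : ℝ → ℝ} (hc : ContinuousOn h (Icc a b)) :
    ∫ t in Ioc a b, |h t| ≤ Real.sqrt (∫ t in Ioc a b, h t ^ 2) * Real.sqrt (b - a) := by
  have hmeas : MeasurableSet (Ioc a b) := measurableSet_Ioc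
  have hfin : IsFiniteMeasure (volume.restrict (Ioc a b)) :=
    ⟨by simp [Measure.restrict_apply_univ]⟩
  have hsm : AEStronglyMeasurable h (volume.restrict (Ioc a b)) :=
    (hc.mono Ioc_subset_Icc_self).aestronglyMeasurable hmeas
  obtain ⟨M, hM⟩ := (isCompact_Icc (a := a) (b := b)).exists_bound_of_continuousOn hc
  have hmem : MemLp h (ENNReal.ofReal 2) (volume.restrict (Ioc a b)) := by
    refine MemLp.of_bound hsm M ?_
    exact ae_restrict_of_forall_mem hmeas fun x hx => hM x (Ioc_subset_Icc_self hx)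
  have hmem1 : MemLp (fun _ : ℝ => (1:ℝ)) (ENNReal.ofReal 2) (volume.restrict (Ioc a b)) :=
    memLp_const 1
  have conj : (2:ℝ).HolderConjugate 2 := Real.HolderConjugate.two_two
  have H := integral_mul_le_Lp_mul_Lq_of_nonneg (μ := volume.restrict (Ioc a b)) conj
    (f := fun t => |h t|) (g := fun _ => 1)
    (Eventually.of_forall fun x => abs_nonneg _) (Eventually.of_forall fun x => one_pos.le)
    (hmem.abs) hmem1
  simp only [mul_one] at H
  have h1 : ∫ t in Ioc a b, |h t| ^ (2:ℝ) ∂volume = ∫ t in Ioc a b, h t ^ 2 := by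
    refine integral_congr_ae (Eventually.of_forall fun x => ?_)
    simp [Real.rpow_two, sq_abs]
  have h2 : ∫ t in Ioc a b, (1:ℝ) ^ (2:ℝ) ∂volume = b - a := by
    simp [Real.volume_Ioc, ENNReal.toReal_ofReal (sub_nonneg.2 hab), hab]
  rw [h1, h2] at H
  calc ∫ t in Ioc a b, |h t| ≤ (∫ t in Ioc a b, h t ^ 2) ^ ((1:ℝ)/2) * (b - a) ^ ((1:ℝ)/2) := H
    _ = Real.sqrt (∫ t in Ioc a b, h t ^ 2) * Real.sqrt (b - a) := by
        rw [Real.sqrt_eq_rpow, Real.sqrt_eq_rpow]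

lemma wsce_ftc_est {v w : ℝ → ℝ} {x y : ℝ} (hxy : x ≤ y)
    (hd : ∀ t ∈ Icc x y, HasDerivAt v (w t) t) (hw : ContinuousOn w (Icc x y)) :
    |v y - v x| ≤ Real.sqrt (∫ t in Ioc x y, w t ^ 2) * Real.sqrt (y - x) := by
  have hint : IntervalIntegrable w volume x y := by
    apply ContinuousOn.intervalIntegrable
    rwa [uIcc_of_le hxy]
  have heq : ∫ t in x..y, w t = v y - v x :=
    intervalIntegral.integral_eq_sub_of_hasDerivAt
      (fun t ht => hd t (by rwa [uIcc_of_le hxy] at ht)) hint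
  calc |v y - v x| = |∫ t in x..y, w t| := by rw [heq]
    _ ≤ ∫ t in x..y, |w t| := intervalIntegral.abs_integral_le_integral_abs hxy
    _ = ∫ t in Ioc x y, |w t| := intervalIntegral.integral_of_le hxy
    _ ≤ Real.sqrt (∫ t in Ioc x y, w t ^ 2) * Real.sqrt (y - x) := wsce_cs hxy hw

lemma wsce_int_le {s : Set ℝ} (hs : MeasurableSet s) {w : ℝ → ℝ}
    (hm : AEStronglyMeasurable w (volume.restrict s)) {c : ℝ} (hc : 0 ≤ c)
    (hb : ∫⁻ t in s, ENNReal.ofReal (w t ^ 2) ≤ ENNReal.ofReal c) :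
    ∫ t in s, w t ^ 2 ≤ c := by
  rw [integral_eq_lintegral_of_nonneg_ae (Eventually.of_forall fun x => sq_nonneg _)
    (hm.pow 2)]
  exact ENNReal.toReal_le_of_le_ofReal hc hb

lemma wsce_L2bound {β C' : ℝ} (hC' : 0 ≤ C') {b : ℝ} (hb : 0 < b) {w : ℝ → ℝ}
    (hw : ∫⁻ x in Ioi (0:ℝ), ENNReal.ofReal (w x ^ 2 * Real.exp (β * x)) ≤ ENNReal.ofReal C') :
    ∫⁻ x in Ioc (0:ℝ) b, ENNReal.ofReal (w x ^ 2)
      ≤ ENNReal.ofReal (C' * Real.exp (|β| * b)) := by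
  have key : ∀ x ∈ Ioc (0:ℝ) b, ENNReal.ofReal (w x ^ 2)
      ≤ ENNReal.ofReal (Real.exp (|β| * b)) * ENNReal.ofReal (w x ^ 2 * Real.exp (β * x)) := by
    intro x hx
    rw [← ENNReal.ofReal_mul (Real.exp_nonneg _)]
    apply ENNReal.ofReal_le_ofReal
    have h1 : (1:ℝ) ≤ Real.exp (|β| * b) * Real.exp (β * x) := by
      rw [← Real.exp_add]
      rw [show (1:ℝ) = Real.exp 0 by simp]
      apply Real.exp_le_exp.2
      rcases le_or_gt 0 β with hβ | hβ
      · linarith [mul_nonneg hβ hx.1.le, mul_nonneg (abs_nonneg β) hb.le]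
      · rw [abs_of_neg hβ]
        nlinarith [hx.2, hx.1.le]
    calc w x ^ 2 = w x ^ 2 * 1 := by ring
      _ ≤ w x ^ 2 * (Real.exp (|β| * b) * Real.exp (β * x)) := by
          apply mul_le_mul_of_nonneg_left h1 (sq_nonneg _)
      _ = Real.exp (|β| * b) * (w x ^ 2 * Real.exp (β * x)) := by ring
  calc ∫⁻ x in Ioc (0:ℝ) b, ENNReal.ofReal (w x ^ 2)
      ≤ ∫⁻ x in Ioc (0:ℝ) b,
          ENNReal.ofReal (Real.exp (|β| * b)) * ENNReal.ofReal (w x ^ 2 * Real.exp (β * x)) :=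
        lintegral_mono_ae (ae_restrict_of_forall_mem measurableSet_Ioc key)
    _ = ENNReal.ofReal (Real.exp (|β| * b)) *
          ∫⁻ x in Ioc (0:ℝ) b, ENNReal.ofReal (w x ^ 2 * Real.exp (β * x)) :=
        lintegral_const_mul' _ _ ENNReal.ofReal_ne_top
    _ ≤ ENNReal.ofReal (Real.exp (|β| * b)) *
          ∫⁻ x in Ioi (0:ℝ), ENNReal.ofReal (w x ^ 2 * Real.exp (β * x)) := by
        gcongr
        exact Ioc_subset_Ioi_self
    _ ≤ ENNReal.ofReal (Real.exp (|β| * b)) * ENNReal.ofReal C' := by gcongr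
    _ = ENNReal.ofReal (C' * Real.exp (|β| * b)) := by
        rw [← ENNReal.ofReal_mul (Real.exp_nonneg _), mul_comm]

lemma wsce_exists_small {c : ℝ} (hc : 0 ≤ c) {w : ℝ → ℝ}
    (hw : ∫⁻ x in Ioc (0:ℝ) 2, ENNReal.ofReal (w x ^ 2) ≤ ENNReal.ofReal c) :
    ∃ x0 ∈ Ioc (1:ℝ) 2, w x0 ^ 2 ≤ c + 1 := by
  by_contra hcon
  push_neg at hcon
  have key : ∀ x ∈ Ioc (1:ℝ) 2, ENNReal.ofReal (c + 1) ≤ ENNReal.ofReal (w x ^ 2) :=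
    fun x hx => ENNReal.ofReal_le_ofReal (hcon x hx).le
  have h1 : ENNReal.ofReal (c + 1) ≤ ∫⁻ x in Ioc (1:ℝ) 2, ENNReal.ofReal (w x ^ 2) := by
    calc ENNReal.ofReal (c + 1)
        = ∫⁻ _ in Ioc (1:ℝ) 2, ENNReal.ofReal (c + 1) := by
          rw [setLIntegral_const, Real.volume_Ioc]
          norm_num
      _ ≤ _ := lintegral_mono_ae (ae_restrict_of_forall_mem measurableSet_Ioc key)
  have h2 : (∫⁻ x in Ioc (1:ℝ) 2, ENNReal.ofReal (w x ^ 2))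
      ≤ ∫⁻ x in Ioc (0:ℝ) 2, ENNReal.ofReal (w x ^ 2) :=
    lintegral_mono' (Measure.restrict_mono (Ioc_subset_Ioc (by norm_num) le_rfl) le_rfl) le_rfl
  have := (h1.trans h2).trans hw
  rw [ENNReal.ofReal_le_ofReal_iff hc] at this
  linarith

lemma wsce_cont {k : ℕ} {F : ℝ → ℝ} (hF : ContDiffOn ℝ (k+1) F (Ioi (0:ℝ)))
    {j : ℕ} (hj : j ≤ k + 1) :
    ContinuousOn (iteratedDerivWithin j F (Ioi (0:ℝ))) (Ioi (0:ℝ)) :=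
  hF.continuousOn_iteratedDerivWithin (by exact_mod_cast hj) (uniqueDiffOn_Ioi 0)

lemma wsce_hasDerivAt {k : ℕ} {F : ℝ → ℝ} (hF : ContDiffOn ℝ (k+1) F (Ioi (0:ℝ)))
    {j : ℕ} (hj : j ≤ k) {x : ℝ} (hx : x ∈ Ioi (0:ℝ)) :
    HasDerivAt (iteratedDerivWithin j F (Ioi (0:ℝ)))
      (iteratedDerivWithin (j+1) F (Ioi (0:ℝ)) x) x := by
  have hdiff : DifferentiableOn ℝ (iteratedDerivWithin j F (Ioi (0:ℝ))) (Ioi (0:ℝ)) :=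
    hF.differentiableOn_iteratedDerivWithin (by exact_mod_cast Nat.lt_succ_of_le hj)
      (uniqueDiffOn_Ioi 0)
  have hd : DifferentiableAt ℝ (iteratedDerivWithin j F (Ioi (0:ℝ))) x :=
    (hdiff x hx).differentiableAt ((isOpen_Ioi).mem_nhds hx)
  have : iteratedDerivWithin (j+1) F (Ioi (0:ℝ)) x
      = deriv (iteratedDerivWithin j F (Ioi (0:ℝ))) x := by
    rw [iteratedDerivWithin_succ,
      derivWithin_of_isOpen isOpen_Ioi hx]
  rw [this]
  exact hd.hasDerivAt

lemma wsce_est {k : ℕ} {F : ℝ → ℝ} (hF : ContDiffOn ℝ (k+1) F (Ioi (0:ℝ))) {β C' : ℝ}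
    (hC' : 0 ≤ C')
    (hw : ∀ j ≤ k+1, ∫⁻ x in Ioi (0:ℝ),
      ENNReal.ofReal ((iteratedDerivWithin j F (Ioi (0:ℝ)) x) ^ 2 * Real.exp (β * x))
        ≤ ENNReal.ofReal C')
    {j : ℕ} (hj : j ≤ k) {b : ℝ} (hb : 0 < b) {x y : ℝ}
    (hx : x ∈ Ioc (0:ℝ) b) (hy : y ∈ Ioc (0:ℝ) b) (hxy : x ≤ y) :
    |iteratedDerivWithin j F (Ioi (0:ℝ)) y - iteratedDerivWithin j F (Ioi (0:ℝ)) x|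
      ≤ Real.sqrt (C' * Real.exp (|β| * b)) * Real.sqrt (y - x) := by
  set w := iteratedDerivWithin (j+1) F (Ioi (0:ℝ)) with hwdef
  have hIcc : Icc x y ⊆ Ioi (0:ℝ) := fun t ht => lt_of_lt_of_le hx.1 ht.1
  have hcw : ContinuousOn w (Icc x y) := (wsce_cont hF (by omega)).mono hIcc
  have hd : ∀ t ∈ Icc x y, HasDerivAt (iteratedDerivWithin j F (Ioi (0:ℝ))) (w t) t :=
    fun t ht => wsce_hasDerivAt hF hj (hIcc ht)
  have h1 := wsce_ftc_est hxy hd hcw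
  have h2 : ∫ t in Ioc x y, w t ^ 2 ≤ C' * Real.exp (|β| * b) := by
    apply wsce_int_le measurableSet_Ioc
      ((hcw.mono Ioc_subset_Icc_self).aestronglyMeasurable measurableSet_Ioc)
      (mul_nonneg hC' (Real.exp_nonneg _))
    calc ∫⁻ t in Ioc x y, ENNReal.ofReal (w t ^ 2)
        ≤ ∫⁻ t in Ioc (0:ℝ) b, ENNReal.ofReal (w t ^ 2) :=
          lintegral_mono' (Measure.restrict_mono (Ioc_subset_Ioc hx.1.le hy.2) le_rfl) le_rfl
      _ ≤ ENNReal.ofReal (C' * Real.exp (|β| * b)) := wsce_L2bound hC' hb (hw (j+1) (by omega))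
  calc |iteratedDerivWithin j F (Ioi (0:ℝ)) y - iteratedDerivWithin j F (Ioi (0:ℝ)) x|
      ≤ Real.sqrt (∫ t in Ioc x y, w t ^ 2) * Real.sqrt (y - x) := h1
    _ ≤ Real.sqrt (C' * Real.exp (|β| * b)) * Real.sqrt (y - x) :=
        mul_le_mul_of_nonneg_right (Real.sqrt_le_sqrt h2) (Real.sqrt_nonneg _)

lemma wsce_sup {k : ℕ} {F : ℝ → ℝ} (hF : ContDiffOn ℝ (k+1) F (Ioi (0:ℝ))) {β C' : ℝ}
    (hC' : 0 ≤ C')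
    (hw : ∀ j ≤ k+1, ∫⁻ x in Ioi (0:ℝ),
      ENNReal.ofReal ((iteratedDerivWithin j F (Ioi (0:ℝ)) x) ^ 2 * Real.exp (β * x))
        ≤ ENNReal.ofReal C')
    {j : ℕ} (hj : j ≤ k) {b : ℝ} (hb : 2 ≤ b) {x : ℝ} (hx : x ∈ Ioc (0:ℝ) b) :
    |iteratedDerivWithin j F (Ioi (0:ℝ)) x|
      ≤ Real.sqrt (C' * Real.exp (|β| * 2) + 1)
        + Real.sqrt (C' * Real.exp (|β| * b)) * Real.sqrt b := by
  set u := iteratedDerivWithin j F (Ioi (0:ℝ)) with hudef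
  have hb0 : (0:ℝ) < b := lt_of_lt_of_le (by norm_num) hb
  obtain ⟨x0, hx0, hx0le⟩ := wsce_exists_small
    (mul_nonneg hC' (Real.exp_nonneg _))
    (wsce_L2bound hC' (by norm_num) (hw j (by omega)))
  have hx0b : x0 ∈ Ioc (0:ℝ) b := ⟨lt_trans one_pos hx0.1, hx0.2.trans hb⟩
  have habs : |u x0| ≤ Real.sqrt (C' * Real.exp (|β| * 2) + 1) := by
    rw [← Real.sqrt_sq_eq_abs]
    exact Real.sqrt_le_sqrt hx0le
  have hdiffb : ∀ {s t : ℝ}, s ∈ Ioc (0:ℝ) b → t ∈ Ioc (0:ℝ) b → s ≤ t →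
      Real.sqrt (t - s) ≤ Real.sqrt b :=
    fun hs ht hst => Real.sqrt_le_sqrt (by linarith [hs.1, ht.2])
  rcases le_total x x0 with hc | hc
  · have h1 := wsce_est hF hC' hw hj hb0 hx hx0b hc
    have h2 : Real.sqrt (x0 - x) ≤ Real.sqrt b := hdiffb hx hx0b hc
    have h3 : |u x| ≤ |u x0| + |u x0 - u x| := by
      have h := abs_sub (u x0) (u x0 - u x)
      have he : u x0 - (u x0 - u x) = u x := by ring
      rwa [he] at h
    calc |u x| ≤ |u x0| + |u x0 - u x| := h3
      _ ≤ Real.sqrt (C' * Real.exp (|β| * 2) + 1)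
          + Real.sqrt (C' * Real.exp (|β| * b)) * Real.sqrt b := by
        refine add_le_add habs (h1.trans ?_)
        exact mul_le_mul_of_nonneg_left h2 (Real.sqrt_nonneg _)
  · have h1 := wsce_est hF hC' hw hj hb0 hx0b hx hc
    have h2 : Real.sqrt (x - x0) ≤ Real.sqrt b := hdiffb hx0b hx hc
    have h3 : |u x| ≤ |u x0| + |u x - u x0| := by
      have h := abs_add_le (u x0) (u x - u x0)
      have he : u x0 + (u x - u x0) = u x := by ring
      rwa [he] at h
    calc |u x| ≤ |u x0| + |u x - u x0| := h3
      _ ≤ Real.sqrt (C' * Real.exp (|β| * 2) + 1)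
          + Real.sqrt (C' * Real.exp (|β| * b)) * Real.sqrt b := by
        refine add_le_add habs (h1.trans ?_)
        exact mul_le_mul_of_nonneg_left h2 (Real.sqrt_nonneg _)

set_option maxHeartbeats 2000000

/-- For `α < β` and `k ≥ 0`, the weighted Sobolev space `H^{k+1}_β(ℝ₊)`
(weight `e^{βx}`) is compactly embedded in `H^k_α(ℝ₊)` (weight `e^{αx}`): every sequence
bounded in the `H^{k+1}_β`-norm has a subsequence converging in the `H^k_α`-norm. -/
theorem weighted_sobolev_compact_embedding
    (α β : ℝ) (hαβ : α < β) (k : ℕ)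
    (f : ℕ → ℝ → ℝ)
    (hf : ∀ n, ContDiffOn ℝ (k + 1) (f n) (Ioi (0 : ℝ)))
    (C : ℝ)
    (hbdd : ∀ n,
      ∑ j ∈ Finset.range (k + 2),
        ∫⁻ x in Ioi (0 : ℝ),
          ENNReal.ofReal ((iteratedDerivWithin j (f n) (Ioi (0 : ℝ)) x) ^ 2 *
            Real.exp (β * x))
        ≤ ENNReal.ofReal C) :
    ∃ φ : ℕ → ℕ, StrictMono φ ∧ ∃ g : ℝ → ℝ, ContDiffOn ℝ k g (Ioi (0 : ℝ)) ∧
      Tendsto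
        (fun n => ∑ j ∈ Finset.range (k + 1),
          ∫⁻ x in Ioi (0 : ℝ),
            ENNReal.ofReal
              ((iteratedDerivWithin j (f (φ n)) (Ioi (0 : ℝ)) x -
                iteratedDerivWithin j g (Ioi (0 : ℝ)) x) ^ 2 * Real.exp (α * x)))
        atTop (𝓝 0) := by
  set u : ℕ → ℕ → ℝ → ℝ := fun n j => iteratedDerivWithin j (f n) (Ioi (0 : ℝ)) with hudef
  set C' : ℝ := max C 0 with hC'def
  have hC'0 : 0 ≤ C' := le_max_right _ _
  have hw : ∀ n, ∀ j ≤ k+1, ∫⁻ x in Ioi (0:ℝ),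
      ENNReal.ofReal ((iteratedDerivWithin j (f n) (Ioi (0:ℝ)) x) ^ 2 * Real.exp (β * x))
        ≤ ENNReal.ofReal C' := by
    intro n j hj
    calc ∫⁻ x in Ioi (0:ℝ),
        ENNReal.ofReal ((iteratedDerivWithin j (f n) (Ioi (0:ℝ)) x) ^ 2 * Real.exp (β * x))
        ≤ ∑ j' ∈ Finset.range (k + 2), ∫⁻ x in Ioi (0:ℝ),
            ENNReal.ofReal ((iteratedDerivWithin j' (f n) (Ioi (0:ℝ)) x) ^ 2 *
              Real.exp (β * x)) :=
          Finset.single_le_sum (f := fun j' => ∫⁻ x in Ioi (0:ℝ),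
            ENNReal.ofReal ((iteratedDerivWithin j' (f n) (Ioi (0:ℝ)) x) ^ 2 *
              Real.exp (β * x))) (fun _ _ => zero_le) (Finset.mem_range.mpr (by omega))
      _ ≤ ENNReal.ofReal C := hbdd n
      _ ≤ ENNReal.ofReal C' := ENNReal.ofReal_le_ofReal (le_max_left _ _)
  set K : ℝ → ℝ := fun b => C' * Real.exp (|β| * b) with hKdef
  have hK0 : ∀ b, 0 ≤ K b := fun b => mul_nonneg hC'0 (Real.exp_nonneg _)
  set M : ℝ → ℝ := fun b => Real.sqrt (K 2 + 1) + Real.sqrt (K b) * Real.sqrt b with hMdef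
  have hest : ∀ n, ∀ j ≤ k, ∀ b, 0 < b → ∀ x ∈ Ioc (0:ℝ) b, ∀ y ∈ Ioc (0:ℝ) b, x ≤ y →
      |u n j y - u n j x| ≤ Real.sqrt (K b) * Real.sqrt (y - x) :=
    fun n j hj b hb x hx y hy hxy => wsce_est (hf n) hC'0 (hw n) hj hb hx hy hxy
  have hsup : ∀ n, ∀ j ≤ k, ∀ b, 2 ≤ b → ∀ x ∈ Ioc (0:ℝ) b, |u n j x| ≤ M b :=
    fun n j hj b hb x hx => wsce_sup (hf n) hC'0 (hw n) hj hb hx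
  -- extraction of a subsequence converging at positive rational points
  obtain ⟨φ, hφ, hconv⟩ : ∃ φ : ℕ → ℕ, StrictMono φ ∧
      ∀ (q : {q : ℚ // 0 < (q:ℝ)}) (j : Fin (k+1)),
        ∃ L, Tendsto (fun n => u (φ n) j ((q:ℚ):ℝ)) atTop (𝓝 L) := by
    set s : Set ({q : ℚ // 0 < (q:ℝ)} × Fin (k+1) → ℝ) :=
      univ.pi (fun p => Icc (-(M (max 2 ((p.1 : ℚ) : ℝ)))) (M (max 2 ((p.1 : ℚ) : ℝ)))) with hs
    have hcomp : IsCompact s := isCompact_univ_pi fun p => isCompact_Icc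
    have hmem : ∀ n, (fun p : {q : ℚ // 0 < (q:ℝ)} × Fin (k+1) => u n p.2 ((p.1 : ℚ):ℝ)) ∈ s := by
      intro n
      rw [hs, mem_univ_pi]
      intro p
      have h := hsup n p.2 p.2.is_le (max 2 ((p.1:ℚ):ℝ)) (le_max_left _ _)
        ((p.1:ℚ):ℝ) ⟨p.1.2, le_max_right _ _⟩
      rcases abs_le.1 h with ⟨h1, h2⟩
      exact ⟨h1, h2⟩
    obtain ⟨v, hv, φ, hφ, hconv⟩ := hcomp.tendsto_subseq hmem
    refine ⟨φ, hφ, fun q j => ⟨v (q, j), ?_⟩⟩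
    exact tendsto_pi_nhds.1 hconv (q, j)
  refine ⟨φ, hφ, ?_⟩
  have hcauchy : ∀ j ≤ k, ∀ x ∈ Ioi (0:ℝ), ∃ L, Tendsto (fun n => u (φ n) j x) atTop (𝓝 L) := by
    intro j hj x hx
    have hx0 : (0:ℝ) < x := hx
    apply cauchySeq_tendsto_of_complete
    rw [Metric.cauchySeq_iff]
    intro ε hε
    set b : ℝ := x + 1 with hbdef
    have hb0 : (0:ℝ) < b := by linarith
    have hsq0 : 0 < Real.sqrt (K b) + 1 := by positivity
    set e' : ℝ := ε / (3 * (Real.sqrt (K b) + 1)) with he'def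
    have he'0 : 0 < e' := by positivity
    set δ : ℝ := min 1 (e' ^ 2) with hδdef
    have hδ0 : 0 < δ := lt_min one_pos (by positivity)
    obtain ⟨q, hq1, hq2⟩ := exists_rat_btwn (show x < x + δ by linarith)
    have hq0 : (0:ℝ) < (q:ℝ) := lt_trans hx0 hq1
    have hqmem : (q:ℝ) ∈ Ioc (0:ℝ) b := ⟨hq0, by
      have : δ ≤ 1 := min_le_left _ _
      linarith⟩
    have hxmem : x ∈ Ioc (0:ℝ) b := ⟨hx0, by linarith⟩
    have hA : Real.sqrt (K b) * Real.sqrt ((q:ℝ) - x) < ε / 3 := by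
      have h1 : Real.sqrt ((q:ℝ) - x) ≤ e' := by
        have : (q:ℝ) - x ≤ e' ^ 2 := by
          have : δ ≤ e' ^ 2 := min_le_right _ _
          linarith
        calc Real.sqrt ((q:ℝ) - x) ≤ Real.sqrt (e' ^ 2) := Real.sqrt_le_sqrt this
          _ = e' := Real.sqrt_sq he'0.le
      calc Real.sqrt (K b) * Real.sqrt ((q:ℝ) - x) ≤ Real.sqrt (K b) * e' :=
            mul_le_mul_of_nonneg_left h1 (Real.sqrt_nonneg _)
        _ < (Real.sqrt (K b) + 1) * e' := by nlinarith
        _ = ε / 3 := by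
            rw [he'def]
            field_simp
    have hestq : ∀ n, |u n j ((q:ℝ)) - u n j x| ≤ Real.sqrt (K b) * Real.sqrt ((q:ℝ) - x) :=
      fun n => hest n j hj b hb0 x hxmem ((q:ℝ)) hqmem hq1.le
    obtain ⟨L, hL⟩ := hconv ⟨q, hq0⟩ ⟨j, by omega⟩
    have hLc : CauchySeq (fun n => u (φ n) j ((q:ℝ))) := hL.cauchySeq
    obtain ⟨N, hN⟩ := Metric.cauchySeq_iff.1 hLc (ε/3) (by positivity)
    refine ⟨N, fun m hm n hn => ?_⟩
    have t4 := dist_triangle4 (u (φ m) j x) (u (φ m) j ((q:ℝ)))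
      (u (φ n) j ((q:ℝ))) (u (φ n) j x)
    have d1 : dist (u (φ m) j x) (u (φ m) j ((q:ℝ))) < ε / 3 := by
      rw [Real.dist_eq, abs_sub_comm]
      exact lt_of_le_of_lt (hestq (φ m)) hA
    have d2 : dist (u (φ n) j ((q:ℝ))) (u (φ n) j x) < ε / 3 := by
      rw [Real.dist_eq]
      exact lt_of_le_of_lt (hestq (φ n)) hA
    have d3 : dist (u (φ m) j ((q:ℝ))) (u (φ n) j ((q:ℝ))) < ε / 3 := hN m hm n hn
    calc dist (u (φ m) j x) (u (φ n) j x) ≤ _ := t4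
      _ < ε / 3 + ε / 3 + ε / 3 := by
          exact add_lt_add (add_lt_add d1 d3) d2
      _ = ε := by ring
  classical
  set G : ℕ → ℝ → ℝ := fun j x =>
    if h : ∃ L, Tendsto (fun n => u (φ n) j x) atTop (𝓝 L) then h.choose else 0 with hGdef
  have hG : ∀ j ≤ k, ∀ x ∈ Ioi (0:ℝ), Tendsto (fun n => u (φ n) j x) atTop (𝓝 (G j x)) := by
    intro j hj x hx
    have h := hcauchy j hj x hx
    simp only [hGdef, dif_pos h]
    exact h.choose_spec
  have hGsup : ∀ j ≤ k, ∀ b, 2 ≤ b → ∀ x ∈ Ioc (0:ℝ) b, |G j x| ≤ M b := by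
    intro j hj b hb x hx
    exact le_of_tendsto ((hG j hj x hx.1).abs)
      (Eventually.of_forall fun n => hsup (φ n) j hj b hb x hx)
  have hGest : ∀ j ≤ k, ∀ b, 0 < b → ∀ x ∈ Ioc (0:ℝ) b, ∀ y ∈ Ioc (0:ℝ) b, x ≤ y →
      |G j y - G j x| ≤ Real.sqrt (K b) * Real.sqrt (y - x) := by
    intro j hj b hb x hx y hy hxy
    exact le_of_tendsto (((hG j hj y hy.1).sub (hG j hj x hx.1)).abs)
      (Eventually.of_forall fun n => hest (φ n) j hj b hb x hx y hy hxy)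
  have hGcont : ∀ j ≤ k, ContinuousOn (G j) (Ioi (0:ℝ)) := by
    intro j hj x hx
    have hx0 : (0:ℝ) < x := hx
    rw [Metric.continuousWithinAt_iff]
    intro ε hε
    set b : ℝ := x + 1 with hbdef
    have hb0 : (0:ℝ) < b := by linarith
    have hsq0 : (0:ℝ) < Real.sqrt (K b) + 1 := by positivity
    set e' : ℝ := ε / (Real.sqrt (K b) + 1) with he'def
    have he'0 : 0 < e' := by positivity
    refine ⟨min 1 (e' ^ 2), lt_min one_pos (by positivity), fun {y} hy hyx => ?_⟩
    have hy0 : (0:ℝ) < y := hy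
    rw [Real.dist_eq] at hyx
    have hd1 : |y - x| < 1 := lt_of_lt_of_le hyx (min_le_left _ _)
    have hd2 : |y - x| < e' ^ 2 := lt_of_lt_of_le hyx (min_le_right _ _)
    have hymem : y ∈ Ioc (0:ℝ) b := ⟨hy0, by
      rcases abs_lt.1 hd1 with ⟨h1, h2⟩; linarith⟩
    have hxmem : x ∈ Ioc (0:ℝ) b := ⟨hx0, by linarith⟩
    have key : |G j y - G j x| ≤ Real.sqrt (K b) * Real.sqrt |y - x| := by
      rcases le_total x y with hc | hc
      · have := hGest j hj b hb0 x hxmem y hymem hc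
        rwa [abs_of_nonneg (by linarith : (0:ℝ) ≤ y - x)]
      · have := hGest j hj b hb0 y hymem x hxmem hc
        rw [abs_sub_comm, abs_of_nonpos (by linarith : y - x ≤ 0)]
        simpa [neg_sub] using this
    rw [Real.dist_eq]
    calc |G j y - G j x| ≤ Real.sqrt (K b) * Real.sqrt |y - x| := key
      _ ≤ Real.sqrt (K b) * e' := by
          apply mul_le_mul_of_nonneg_left _ (Real.sqrt_nonneg _)
          calc Real.sqrt |y - x| ≤ Real.sqrt (e' ^ 2) := Real.sqrt_le_sqrt hd2.le
            _ = e' := Real.sqrt_sq he'0.le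
      _ < (Real.sqrt (K b) + 1) * e' := by nlinarith [Real.sqrt_nonneg (K b)]
      _ = ε := by rw [he'def]; field_simp
  have hFTC : ∀ j, j + 1 ≤ k → ∀ x ∈ Ioi (0:ℝ), ∀ y ∈ Ioi (0:ℝ), x ≤ y →
      G j y - G j x = ∫ t in x..y, G (j+1) t := by
    intro j hj x hx y hy hxy
    have hx0 : (0:ℝ) < x := hx
    set b : ℝ := max 2 y with hb
    have hb2 : (2:ℝ) ≤ b := le_max_left _ _
    have hyb : y ≤ b := le_max_right _ _
    have hn : ∀ n, u (φ n) j y - u (φ n) j x = ∫ t in x..y, u (φ n) (j+1) t := by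
      intro n
      have hIcc : Icc x y ⊆ Ioi (0:ℝ) := fun t ht => lt_of_lt_of_le hx0 ht.1
      have hcw : ContinuousOn (u (φ n) (j+1)) (Icc x y) :=
        (wsce_cont (hf (φ n)) (by omega)).mono hIcc
      have hint : IntervalIntegrable (u (φ n) (j+1)) volume x y := by
        apply ContinuousOn.intervalIntegrable
        rwa [uIcc_of_le hxy]
      rw [intervalIntegral.integral_eq_sub_of_hasDerivAt
        (fun t ht => wsce_hasDerivAt (hf (φ n)) (by omega)
          (hIcc (by rwa [uIcc_of_le hxy] at ht))) hint]
    have hlhs : Tendsto (fun n => u (φ n) j y - u (φ n) j x) atTop (𝓝 (G j y - G j x)) :=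
      (hG j (by omega) y hy).sub (hG j (by omega) x hx)
    have huIoc : Set.uIoc x y ⊆ Ioc (0:ℝ) b := by
      rw [uIoc_of_le hxy]
      exact Ioc_subset_Ioc hx0.le hyb
    have hrhs : Tendsto (fun n => ∫ t in x..y, u (φ n) (j+1) t) atTop
        (𝓝 (∫ t in x..y, G (j+1) t)) := by
      apply intervalIntegral.tendsto_integral_filter_of_dominated_convergence
        (bound := fun _ => M b)
      · refine Eventually.of_forall fun n => ?_
        apply ContinuousOn.aestronglyMeasurable _ measurableSet_uIoc
        exact (wsce_cont (hf (φ n)) (show j+1 ≤ k+1 by omega)).mono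
          (fun t ht => lt_of_lt_of_le (huIoc ht).1 le_rfl)
      · refine Eventually.of_forall fun n => Eventually.of_forall fun t ht => ?_
        rw [Real.norm_eq_abs]
        exact hsup (φ n) (j+1) (by omega) b hb2 t (huIoc ht)
      · exact intervalIntegrable_const
      · refine Eventually.of_forall fun t ht => ?_
        exact hG (j+1) (by omega) t (lt_of_lt_of_le (huIoc ht).1 le_rfl)
    simp_rw [hn] at hlhs
    exact tendsto_nhds_unique hlhs hrhs
  have hGderiv : ∀ j, j + 1 ≤ k → ∀ x ∈ Ioi (0:ℝ), HasDerivAt (G j) (G (j+1) x) x := by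
    intro j hj x hx
    have hcont : ContinuousOn (G (j+1)) (Ioi (0:ℝ)) := hGcont (j+1) (by omega)
    have hca : ContinuousAt (G (j+1)) x := hcont.continuousAt (isOpen_Ioi.mem_nhds hx)
    have hmeas : StronglyMeasurableAtFilter (G (j+1)) (𝓝 x) volume :=
      ⟨Ioi 0, isOpen_Ioi.mem_nhds hx, hcont.aestronglyMeasurable measurableSet_Ioi⟩
    have hD : HasDerivAt (fun z => ∫ t in x..z, G (j+1) t) (G (j+1) x) x :=
      intervalIntegral.integral_hasDerivAt_right IntervalIntegrable.refl hmeas hca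
    have hD' : HasDerivAt (fun z => G j x + ∫ t in x..z, G (j+1) t) (G (j+1) x) x :=
      hD.const_add _
    apply hD'.congr_of_eventuallyEq
    filter_upwards [isOpen_Ioi.mem_nhds hx] with y hy
    rcases le_total x y with h | h
    · rw [← hFTC j hj x hx y hy h]; ring
    · rw [intervalIntegral.integral_symm, ← hFTC j hj y hy x hx h]; ring
  have hcd : ∀ m j : ℕ, j + m ≤ k → ContDiffOn ℝ m (G j) (Ioi (0:ℝ)) := by
    intro m
    induction m with
    | zero =>
      intro j hj
      rw [show ((0:ℕ) : WithTop ℕ∞) = 0 by norm_cast, contDiffOn_zero]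
      exact hGcont j (by omega)
    | succ m ih =>
      intro j hj
      rw [show ((m+1 : ℕ) : WithTop ℕ∞) = (m : WithTop ℕ∞) + 1 by push_cast; ring,
        contDiffOn_succ_iff_derivWithin (uniqueDiffOn_Ioi 0)]
      refine ⟨fun x hx =>
        ((hGderiv j (by omega) x hx).differentiableAt.differentiableWithinAt), ?_, ?_⟩
      · intro hω
        exact absurd hω (by simp)
      · apply (ih (j+1) (by omega)).congr
        intro x hx
        rw [derivWithin_of_isOpen isOpen_Ioi hx]
        exact ((hGderiv j (by omega) x hx).deriv)
  have hid : ∀ j ≤ k, ∀ x ∈ Ioi (0:ℝ), iteratedDerivWithin j (G 0) (Ioi (0:ℝ)) x = G j x := by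
    intro j
    induction j with
    | zero => intro _ x _; simp [iteratedDerivWithin_zero]
    | succ j ih =>
      intro hj x hx
      rw [iteratedDerivWithin_succ]
      rw [derivWithin_congr (fun y hy => ih (by omega) y hy) (ih (by omega) x hx)]
      rw [derivWithin_of_isOpen isOpen_Ioi hx]
      exact (hGderiv j (by omega) x hx).deriv
  refine ⟨G 0, hcd k 0 (by omega), ?_⟩
  -- measurability helpers
  have humeas : ∀ n j, j ≤ k+1 → AEMeasurable (u n j) (volume.restrict (Ioi (0:ℝ))) :=
    fun n j hj => (wsce_cont (hf n) hj).aemeasurable measurableSet_Ioi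
  have hGmeas : ∀ j ≤ k, AEMeasurable (G j) (volume.restrict (Ioi (0:ℝ))) :=
    fun j hj => (hGcont j hj).aemeasurable measurableSet_Ioi
  have hexpmeas : ∀ c : ℝ, Measurable (fun x : ℝ => Real.exp (c * x)) :=
    fun c => Real.measurable_exp.comp (measurable_const.mul measurable_id)
  have huL2meas : ∀ n j, j ≤ k+1 → AEMeasurable
      (fun x => ENNReal.ofReal ((u n j x) ^ 2 * Real.exp (β * x)))
      (volume.restrict (Ioi (0:ℝ))) := by
    intro n j hj
    exact ((((humeas n j hj).mul (humeas n j hj)).congr (by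
        filter_upwards with x using by simp only [Pi.mul_apply]; ring)).mul
      ((hexpmeas β).aemeasurable)).ennreal_ofReal
  have hGL2meas : ∀ j ≤ k, AEMeasurable
      (fun x => ENNReal.ofReal ((G j x) ^ 2 * Real.exp (β * x)))
      (volume.restrict (Ioi (0:ℝ))) := by
    intro j hj
    exact ((((hGmeas j hj).mul (hGmeas j hj)).congr (by
        filter_upwards with x using by simp only [Pi.mul_apply]; ring)).mul
      ((hexpmeas β).aemeasurable)).ennreal_ofReal
  -- Fatou: the limit has the same weighted L² bound
  have hGL2 : ∀ j ≤ k, ∫⁻ x in Ioi (0:ℝ),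
      ENNReal.ofReal ((G j x) ^ 2 * Real.exp (β * x)) ≤ ENNReal.ofReal C' := by
    intro j hj
    have hcongr : ∫⁻ x in Ioi (0:ℝ), ENNReal.ofReal ((G j x) ^ 2 * Real.exp (β * x))
        = ∫⁻ x in Ioi (0:ℝ), liminf
            (fun n => ENNReal.ofReal ((u (φ n) j x) ^ 2 * Real.exp (β * x))) atTop := by
      apply lintegral_congr_ae
      filter_upwards [ae_restrict_mem measurableSet_Ioi] with x hx
      have h1 : Tendsto (fun n => ENNReal.ofReal ((u (φ n) j x) ^ 2 * Real.exp (β * x)))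
          atTop (𝓝 (ENNReal.ofReal ((G j x) ^ 2 * Real.exp (β * x)))) :=
        ENNReal.tendsto_ofReal (((hG j hj x hx).pow 2).mul_const _)
      exact h1.liminf_eq.symm
    rw [hcongr]
    calc ∫⁻ x in Ioi (0:ℝ), liminf
          (fun n => ENNReal.ofReal ((u (φ n) j x) ^ 2 * Real.exp (β * x))) atTop
        ≤ liminf (fun n => ∫⁻ x in Ioi (0:ℝ),
            ENNReal.ofReal ((u (φ n) j x) ^ 2 * Real.exp (β * x))) atTop :=
          lintegral_liminf_le' (fun n => huL2meas (φ n) j (by omega))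
      _ ≤ ENNReal.ofReal C' := by
          apply Filter.liminf_le_of_frequently_le'
          exact Filter.Frequently.of_forall (fun n => hw (φ n) j (by omega))
  -- tail estimate
  have htail : ∀ j ≤ k, ∀ R, 0 < R → ∀ n,
      ∫⁻ x in Ioi R, ENNReal.ofReal ((u (φ n) j x - G j x) ^ 2 * Real.exp (α * x))
        ≤ ENNReal.ofReal (4 * C' * Real.exp ((α - β) * R)) := by
    intro j hj R hR n
    have hpt : ∀ x ∈ Ioi R,
        ENNReal.ofReal ((u (φ n) j x - G j x) ^ 2 * Real.exp (α * x))
          ≤ ENNReal.ofReal (2 * Real.exp ((α - β) * R)) *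
            (ENNReal.ofReal ((u (φ n) j x) ^ 2 * Real.exp (β * x)) +
              ENNReal.ofReal ((G j x) ^ 2 * Real.exp (β * x))) := by
      intro x hx
      rw [← ENNReal.ofReal_add (by positivity) (by positivity),
        ← ENNReal.ofReal_mul (by positivity)]
      apply ENNReal.ofReal_le_ofReal
      have hxR : R ≤ x := le_of_lt hx
      have hexp : Real.exp (α * x) ≤ Real.exp ((α - β) * R) * Real.exp (β * x) := by
        rw [← Real.exp_add]
        apply Real.exp_le_exp.2
        nlinarith
      have hsq : (u (φ n) j x - G j x) ^ 2 ≤ 2 * ((u (φ n) j x) ^ 2 + (G j x) ^ 2) := by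
        nlinarith [sq_nonneg (u (φ n) j x + G j x)]
      calc (u (φ n) j x - G j x) ^ 2 * Real.exp (α * x)
          ≤ (2 * ((u (φ n) j x) ^ 2 + (G j x) ^ 2)) *
              (Real.exp ((α - β) * R) * Real.exp (β * x)) := by
            apply mul_le_mul hsq hexp (Real.exp_nonneg _) (by positivity)
        _ = 2 * Real.exp ((α - β) * R) *
              ((u (φ n) j x) ^ 2 * Real.exp (β * x) + (G j x) ^ 2 * Real.exp (β * x)) := by
            ring
    have hsub : Ioi R ⊆ Ioi (0:ℝ) := Ioi_subset_Ioi hR.le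
    have hmono : volume.restrict (Ioi R) ≤ volume.restrict (Ioi (0:ℝ)) :=
      Measure.restrict_mono hsub le_rfl
    calc ∫⁻ x in Ioi R, ENNReal.ofReal ((u (φ n) j x - G j x) ^ 2 * Real.exp (α * x))
        ≤ ∫⁻ x in Ioi R, ENNReal.ofReal (2 * Real.exp ((α - β) * R)) *
            (ENNReal.ofReal ((u (φ n) j x) ^ 2 * Real.exp (β * x)) +
              ENNReal.ofReal ((G j x) ^ 2 * Real.exp (β * x))) :=
          lintegral_mono_ae (ae_restrict_of_forall_mem measurableSet_Ioi hpt)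
      _ = ENNReal.ofReal (2 * Real.exp ((α - β) * R)) *
            ((∫⁻ x in Ioi R, ENNReal.ofReal ((u (φ n) j x) ^ 2 * Real.exp (β * x))) +
              ∫⁻ x in Ioi R, ENNReal.ofReal ((G j x) ^ 2 * Real.exp (β * x))) := by
          rw [lintegral_const_mul' _ _ ENNReal.ofReal_ne_top,
            lintegral_add_left' ((huL2meas (φ n) j (by omega)).mono_measure hmono)]
      _ ≤ ENNReal.ofReal (2 * Real.exp ((α - β) * R)) *
            (ENNReal.ofReal C' + ENNReal.ofReal C') := by
          gcongr
          · exact le_trans (lintegral_mono' hmono le_rfl) (hw (φ n) j (by omega))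
          · exact le_trans (lintegral_mono' hmono le_rfl) (hGL2 j hj)
      _ ≤ ENNReal.ofReal (4 * C' * Real.exp ((α - β) * R)) := by
          rw [← ENNReal.ofReal_add hC'0 hC'0, ← ENNReal.ofReal_mul (by positivity)]
          apply ENNReal.ofReal_le_ofReal
          apply le_of_eq
          ring
  -- middle part: dominated convergence
  have hmid : ∀ j ≤ k, ∀ R, 2 ≤ R →
      Tendsto (fun n => ∫⁻ x in Ioc (0:ℝ) R,
        ENNReal.ofReal ((u (φ n) j x - G j x) ^ 2 * Real.exp (α * x))) atTop (𝓝 0) := by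
    intro j hj R hR
    have hR0 : (0:ℝ) < R := by linarith
    have hsub : Ioc (0:ℝ) R ⊆ Ioi (0:ℝ) := Ioc_subset_Ioi_self
    have hmono : volume.restrict (Ioc (0:ℝ) R) ≤ volume.restrict (Ioi (0:ℝ)) :=
      Measure.restrict_mono hsub le_rfl
    have hFmeas : ∀ n, AEMeasurable
        (fun x => ENNReal.ofReal ((u (φ n) j x - G j x) ^ 2 * Real.exp (α * x)))
        (volume.restrict (Ioc (0:ℝ) R)) := by
      intro n
      have hd : AEMeasurable (fun x => u (φ n) j x - G j x) (volume.restrict (Ioc (0:ℝ) R)) :=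
        ((humeas (φ n) j (by omega)).sub (hGmeas j hj)).mono_measure hmono
      exact (((hd.mul hd).congr (by filter_upwards with x using by simp only [Pi.mul_apply]; ring)).mul
        ((hexpmeas α).aemeasurable)).ennreal_ofReal
    have key := tendsto_lintegral_of_dominated_convergence'
      (μ := volume.restrict (Ioc (0:ℝ) R))
      (F := fun n x => ENNReal.ofReal ((u (φ n) j x - G j x) ^ 2 * Real.exp (α * x)))
      (f := fun _ => 0)
      (fun _ => ENNReal.ofReal ((2 * M R) ^ 2 * Real.exp (|α| * R)))
      hFmeas
      (by
        intro n
        apply ae_restrict_of_forall_mem measurableSet_Ioc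
        intro x hx
        apply ENNReal.ofReal_le_ofReal
        have h1 : |u (φ n) j x| ≤ M R := hsup (φ n) j hj R hR x hx
        have h2 : |G j x| ≤ M R := hGsup j hj R hR x hx
        have h3 : (u (φ n) j x - G j x) ^ 2 ≤ (2 * M R) ^ 2 := by
          rcases abs_le.1 h1 with ⟨h1a, h1b⟩
          rcases abs_le.1 h2 with ⟨h2a, h2b⟩
          nlinarith
        have h4 : Real.exp (α * x) ≤ Real.exp (|α| * R) := by
          apply Real.exp_le_exp.2
          rcases le_or_gt 0 α with hα | hα
          · rw [abs_of_nonneg hα]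
            exact mul_le_mul_of_nonneg_left hx.2 hα
          · rw [abs_of_neg hα]
            nlinarith [hx.1, hx.2]
        exact mul_le_mul h3 h4 (Real.exp_nonneg _) (by positivity))
      (by
        rw [setLIntegral_const]
        exact ENNReal.mul_ne_top ENNReal.ofReal_ne_top
          (by simp [Real.volume_Ioc]))
      (by
        apply ae_restrict_of_forall_mem measurableSet_Ioc
        intro x hx
        have h1 : Tendsto (fun n => u (φ n) j x - G j x) atTop (𝓝 0) := by
          simpa using (hG j hj x hx.1).sub_const (G j x)
        have h2 : Tendsto (fun n => (u (φ n) j x - G j x) ^ 2 * Real.exp (α * x))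
            atTop (𝓝 0) := by
          simpa using (h1.pow 2).mul_const (Real.exp (α * x))
        simpa using ENNReal.tendsto_ofReal h2)
    simpa using key
  -- per-index convergence
  have hjt : ∀ j ≤ k, Tendsto (fun n => ∫⁻ x in Ioi (0:ℝ),
      ENNReal.ofReal ((u (φ n) j x - G j x) ^ 2 * Real.exp (α * x))) atTop (𝓝 0) := by
    intro j hj
    rw [ENNReal.tendsto_nhds_zero]
    intro ε hε
    set ε₂ : ℝ≥0∞ := min (ε / 2) 1 with hε₂def
    have hε₂0 : 0 < ε₂ := lt_min (ENNReal.half_pos hε.ne') zero_lt_one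
    have hε₂top : ε₂ ≠ ⊤ := ((min_le_right _ _).trans_lt (by norm_num)).ne
    set δ : ℝ := ε₂.toReal with hδdef
    have hδ0 : 0 < δ := ENNReal.toReal_pos hε₂0.ne' hε₂top
    have hδle : ENNReal.ofReal δ ≤ ε / 2 := by
      rw [hδdef, ENNReal.ofReal_toReal hε₂top]
      exact min_le_left _ _
    have hRlim : Tendsto (fun R : ℝ => 4 * C' * Real.exp ((α - β) * R)) atTop (𝓝 0) := by
      have h1 : Tendsto (fun R : ℝ => Real.exp ((α - β) * R)) atTop (𝓝 0) := by
        rw [Real.tendsto_exp_comp_nhds_zero]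
        exact (tendsto_const_mul_atBot_of_neg (by linarith)).2 tendsto_id
      have h2 := h1.const_mul (4 * C')
      rw [mul_zero] at h2
      exact h2
    obtain ⟨R, hR1, hR2⟩ :=
      ((hRlim.eventually (eventually_le_nhds hδ0)).and (eventually_ge_atTop 2)).exists
    have hR0 : (0:ℝ) < R := by linarith
    have hmid' := ENNReal.tendsto_nhds_zero.1 (hmid j hj R hR2) (ε/2)
      (ENNReal.half_pos hε.ne')
    filter_upwards [hmid'] with n hn
    have hsplit : ∫⁻ x in Ioi (0:ℝ),
        ENNReal.ofReal ((u (φ n) j x - G j x) ^ 2 * Real.exp (α * x))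
        = (∫⁻ x in Ioc (0:ℝ) R,
            ENNReal.ofReal ((u (φ n) j x - G j x) ^ 2 * Real.exp (α * x)))
          + ∫⁻ x in Ioi R,
            ENNReal.ofReal ((u (φ n) j x - G j x) ^ 2 * Real.exp (α * x)) := by
      rw [← Ioc_union_Ioi_eq_Ioi hR0.le,
        lintegral_union measurableSet_Ioi (Ioc_disjoint_Ioi le_rfl)]
    rw [hsplit]
    calc _ ≤ ε / 2 + ENNReal.ofReal (4 * C' * Real.exp ((α - β) * R)) :=
          add_le_add hn (htail j hj R hR0 n)
      _ ≤ ε / 2 + ε / 2 := by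
          apply add_le_add le_rfl
          exact (ENNReal.ofReal_le_ofReal hR1).trans hδle
      _ = ε := ENNReal.add_halves ε
  -- assemble the sum
  have heq : ∀ n, ∑ j ∈ Finset.range (k + 1),
      ∫⁻ x in Ioi (0:ℝ), ENNReal.ofReal
        ((u (φ n) j x - iteratedDerivWithin j (G 0) (Ioi (0:ℝ)) x) ^ 2 * Real.exp (α * x))
      = ∑ j ∈ Finset.range (k + 1),
      ∫⁻ x in Ioi (0:ℝ), ENNReal.ofReal
        ((u (φ n) j x - G j x) ^ 2 * Real.exp (α * x)) := by
    intro n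
    apply Finset.sum_congr rfl
    intro j hjm
    apply lintegral_congr_ae
    filter_upwards [ae_restrict_mem measurableSet_Ioi] with x hx
    rw [hid j (Nat.lt_succ_iff.1 (Finset.mem_range.1 hjm)) x hx]
  have hfinal : Tendsto (fun n => ∑ j ∈ Finset.range (k + 1),
      ∫⁻ x in Ioi (0:ℝ), ENNReal.ofReal
        ((u (φ n) j x - G j x) ^ 2 * Real.exp (α * x))) atTop (𝓝 0) := by
    have h := tendsto_finset_sum (Finset.range (k + 1))
      (fun j hjm => hjt j (Nat.lt_succ_iff.1 (Finset.mem_range.1 hjm)))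
    simpa using h
  exact hfinal.congr (fun n => (heq n).symm)
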